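/- Let R be a commutative ring, n a natural number, and M a free R-module with basis e indexed by Fin n ⊕ Fin n. In the exterior algebra Λ(M), write ψ̄ᵢ = ι(e(inl i)) and ψⱼ = ι(e(inr j)). Then for every matrix A : Matrix (Fin n) (Fin n) R, the ordered product ∏_{i=0}^{n-1} ( ∑_{j=0}^{n-1} A i j • (ψ̄ᵢ * ψⱼ) ) equals (det A) • ∏_{i=0}^{n-1} (ψ̄ᵢ * ψᵢ), where both products are taken in increasing order of i. (This is the exterior-algebra form of the Berezin integral identity ∫ ∏ᵢ dψ̄ᵢ dψᵢ e^{−∑ ψ̄ᵢ Aᵢⱼ ψⱼ} = det A.) -/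

import Mathlib

open ExteriorAlgebra

namespace BerezinAux

variable {R : Type*} [CommRing R] {M : Type*} [AddCommGroup M] [Module R M]

lemma iota_swap (u v : M) : ι R u * ι R v = -(ι R v * ι R u) :=
  eq_neg_of_add_eq_zero_left (ι_add_mul_swap u v)

lemma pair_commute (x y z w : M) :
    Commute (ι R x * ι R y) (ι R z * ι R w) := by
  show _ = _
  calc (ι R x * ι R y) * (ι R z * ι R w)
      = ι R x * (ι R y * ι R z) * ι R w := by noncomm_ring
    _ = ι R x * (-(ι R z * ι R y)) * ι R w := by rw [iota_swap y z]
    _ = -((ι R x * ι R z) * (ι R y * ι R w)) := by noncomm_ring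
    _ = -((-(ι R z * ι R x)) * (ι R y * ι R w)) := by rw [iota_swap x z]
    _ = ι R z * ι R x * (ι R y * ι R w) := by noncomm_ring
    _ = ι R z * ι R x * (-(ι R w * ι R y)) := by rw [iota_swap y w]
    _ = -(ι R z * (ι R x * ι R w) * ι R y) := by noncomm_ring
    _ = -(ι R z * (-(ι R w * ι R x)) * ι R y) := by rw [iota_swap x w]
    _ = (ι R z * ι R w) * (ι R x * ι R y) := by noncomm_ring

lemma pair_mul_pair_eq_zero (x y z : M) :
    (ι R x * ι R z) * (ι R y * ι R z) = 0 := by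
  calc (ι R x * ι R z) * (ι R y * ι R z)
      = ι R x * (ι R z * ι R y) * ι R z := by noncomm_ring
    _ = ι R x * (-(ι R y * ι R z)) * ι R z := by rw [iota_swap z y]
    _ = -((ι R x * ι R y) * (ι R z * ι R z)) := by noncomm_ring
    _ = 0 := by rw [ι_sq_zero]; simp

variable {n : ℕ}

/-- The multilinear map `v ↦ ∏ i, ι (a i) * ι (v i)`. -/
noncomputable def berezinML (a : Fin n → M) :
    MultilinearMap R (fun _ : Fin n => M) (ExteriorAlgebra R M) :=
  (MultilinearMap.mkPiAlgebraFin R n _).compLinearMap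
    (fun i => (LinearMap.mulLeft R (ι R (a i))).comp (ι R))

lemma berezinML_apply (a v : Fin n → M) :
    berezinML (R := R) a v = (List.ofFn fun i => ι R (a i) * ι R (v i)).prod := rfl

/-- The alternating map `v ↦ ∏ i, ι (a i) * ι (v i)`. -/
noncomputable def berezinAlt (a : Fin n → M) :
    AlternatingMap R M (ExteriorAlgebra R M) (Fin n) :=
  { berezinML (R := R) a with
    map_eq_zero_of_eq' := by
      intro v i j hvij hij
      show berezinML (R := R) a v = 0
      rw [berezinML_apply]
      set f : Fin n → ExteriorAlgebra R M := fun k => ι R (a k) * ι R (v k) with hf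
      have hofn : List.ofFn f = (List.finRange n).map f := (List.ofFn_eq_map (f := f))
      have hmemi : i ∈ List.finRange n := List.mem_finRange i
      have hmemj : j ∈ (List.finRange n).erase i :=
        (List.mem_erase_of_ne hij.symm).mpr (List.mem_finRange j)
      have hperm : List.Perm (List.finRange n) <| i :: j :: ((List.finRange n).erase i).erase j :=
        (List.perm_cons_erase hmemi).trans
          ((List.perm_cons_erase hmemj).cons i)
      have hpc : (List.ofFn f).Pairwise Commute := by
        rw [hofn, List.pairwise_map]
        exact List.Pairwise.imp (fun _ => pair_commute _ _ _ _)
          (List.pairwise_iff_forall_sublist.mpr (fun _ => trivial))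
      have key : (List.ofFn f).prod
          = (f i * f j) * ((((List.finRange n).erase i).erase j).map f).prod := by
        rw [hofn, (hperm.map f).prod_eq' (hofn ▸ hpc)]
        simp [mul_assoc]
      have hzero : f i * f j = 0 := by
        show ι R (a i) * ι R (v i) * (ι R (a j) * ι R (v j)) = 0
        rw [hvij]
        exact pair_mul_pair_eq_zero _ _ _
      rw [key, hzero, zero_mul] }

end BerezinAux

/-- **Berezin integral / determinant identity in the exterior algebra.** -/
theorem exteriorAlgebra_berezin_det {R : Type*} [CommRing R] {M : Type*} [AddCommGroup M]
    [Module R M] {n : ℕ} (e : Module.Basis (Fin n ⊕ Fin n) R M)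
    (A : Matrix (Fin n) (Fin n) R) :
    (List.ofFn fun i : Fin n =>
        ∑ j : Fin n, A i j •
          (ExteriorAlgebra.ι R (e (Sum.inl i)) * ExteriorAlgebra.ι R (e (Sum.inr j)))).prod
      = A.det •
        (List.ofFn fun i : Fin n =>
          ExteriorAlgebra.ι R (e (Sum.inl i)) * ExteriorAlgebra.ι R (e (Sum.inr i))).prod := by
  classical
  set G := BerezinAux.berezinAlt (R := R) (fun i : Fin n => e (Sum.inl i)) with hGdef
  have key : ∀ v : Fin n → M,
      G v = (List.ofFn fun i => ι R (e (Sum.inl i)) * ι R (v i)).prod := fun v => rfl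
  have h1 : (List.ofFn fun i : Fin n =>
        ∑ j : Fin n, A i j • (ι R (e (Sum.inl i)) * ι R (e (Sum.inr j)))).prod
      = G (fun i => ∑ j : Fin n, A i j • e (Sum.inr j)) := by
    rw [key]
    refine congrArg List.prod (congrArg List.ofFn (funext fun i => ?_))
    simp [Finset.mul_sum, mul_smul_comm]
  have h3 : G (fun i => e (Sum.inr i))
      = (List.ofFn fun i : Fin n =>
          ExteriorAlgebra.ι R (e (Sum.inl i)) * ExteriorAlgebra.ι R (e (Sum.inr i))).prod := rfl
  have hsum : G (fun i => ∑ j : Fin n, A i j • e (Sum.inr j))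
      = ∑ r : Fin n → Fin n, G (fun i => A i (r i) • e (Sum.inr (r i))) := by
    simpa using G.toMultilinearMap.map_sum (g := fun i j => A i j • e (Sum.inr j))
  have hsmul : ∀ r : Fin n → Fin n,
      G (fun i => A i (r i) • e (Sum.inr (r i)))
        = (∏ i, A i (r i)) • G (fun i => e (Sum.inr (r i))) := by
    intro r
    simpa using G.toMultilinearMap.map_smul_univ (fun i => A i (r i))
      (fun i => e (Sum.inr (r i)))
  have hzero : ∀ r : Fin n → Fin n, ¬ Function.Injective r →
      G (fun i => e (Sum.inr (r i))) = 0 := by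
    intro r hr
    refine G.map_eq_zero_of_not_injective _ (fun hinj => hr ?_)
    intro x y hxy
    exact hinj (congrArg e (congrArg Sum.inr hxy) : _)
  have hperm : ∀ σ : Equiv.Perm (Fin n),
      G (fun i => e (Sum.inr (σ i))) = Equiv.Perm.sign σ • G (fun i => e (Sum.inr i)) :=
    fun σ => G.map_perm (fun i => e (Sum.inr i)) σ
  have hstep : (∑ r : Fin n → Fin n, (∏ i, A i (r i)) • G (fun i => e (Sum.inr (r i))))
      = ∑ σ : Equiv.Perm (Fin n), (∏ i, A i (σ i)) • G (fun i => e (Sum.inr (σ i))) := by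
    rw [← Finset.sum_subset
        (Finset.subset_univ ((Finset.univ : Finset (Equiv.Perm (Fin n))).image
          fun σ : Equiv.Perm (Fin n) => (σ : Fin n → Fin n)))
        ?h0, Finset.sum_image ?hinj]
    case hinj => exact fun x _ y _ h => Equiv.coe_fn_injective h
    case h0 =>
      intro r _ hr
      have hni : ¬ Function.Injective r := fun hinj =>
        hr (Finset.mem_image.mpr
          ⟨Equiv.ofBijective r (Finite.injective_iff_bijective.mp hinj), Finset.mem_univ _, rfl⟩)
      rw [hzero r hni, smul_zero]
  rw [h1, hsum]
  simp only [hsmul]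
  rw [hstep]
  simp only [hperm]
  rw [← h3]
  have hterm : ∀ σ : Equiv.Perm (Fin n),
      (∏ i, A i (σ i)) • (Equiv.Perm.sign σ • G (fun i => e (Sum.inr i)))
        = (((Equiv.Perm.sign σ : ℤ) : R) * ∏ i, A i (σ i)) • G (fun i => e (Sum.inr i)) := by
    intro σ
    rw [Units.smul_def, ← Int.cast_smul_eq_zsmul R, smul_smul, mul_comm]
  simp only [hterm]
  rw [← Finset.sum_smul]
  congr 1
  rw [← Matrix.det_transpose A, Matrix.det_apply']
  exact Finset.sum_congr rfl fun σ _ => by simp [Matrix.transpose_apply]
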